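/- Let V be a real topological vector space, T ⊆ V a nonempty convex set, and A : T → (V → ℝ) an affine score. Then A is truthful if and only if A is weakly locally truthful: for every t ∈ T there is an open set U ⊆ V containing t such that for all t' ∈ U ∩ T, both A(t')(t) ≤ A(t)(t) and A(t)(t') ≤ A(t')(t'). -/

import Mathlib

/-- Pure real-number core of the transitivity of mutual truthfulness along a segment. -/
lemma realkey (s g0 gx gy a0 ax ay : ℝ) (hs0 : 0 < s) (hs1 : s < 1)
    (H1 : gx - s * ax ≤ g0) (H2 : g0 + s * a0 ≤ gx)
    (H3 : gy - (1 - s) * ay ≤ gx) (H4 : gx + (1 - s) * ax ≤ gy) :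
    gy - ay ≤ g0 ∧ g0 + a0 ≤ gy := by
  have hxy : ax ≤ ay := by nlinarith
  have h0x : a0 ≤ ax := by nlinarith
  constructor <;> nlinarith

/-- Transitivity of mutual truthfulness along a line, for affine scores. -/
lemma key {V : Type*} [AddCommGroup V] [Module ℝ V]
    (A : V → V → ℝ) (t0 tx ty : V) (s : ℝ) (hs0 : 0 ≤ s) (hs1 : s ≤ 1)
    (htx : tx = t0 + s • (ty - t0))
    (h0 : ∃ (ℓ : V →ₗ[ℝ] ℝ) (c : ℝ), ∀ z, A t0 z = ℓ z + c)
    (hx : ∃ (ℓ : V →ₗ[ℝ] ℝ) (c : ℝ), ∀ z, A tx z = ℓ z + c)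
    (hy : ∃ (ℓ : V →ₗ[ℝ] ℝ) (c : ℝ), ∀ z, A ty z = ℓ z + c)
    (H1 : A tx t0 ≤ A t0 t0) (H2 : A t0 tx ≤ A tx tx)
    (H3 : A ty tx ≤ A tx tx) (H4 : A tx ty ≤ A ty ty) :
    A ty t0 ≤ A t0 t0 ∧ A t0 ty ≤ A ty ty := by
  rcases eq_or_lt_of_le hs0 with h|h
  · have : tx = t0 := by rw [htx, ← h, zero_smul, add_zero]
    rw [this] at H3 H4
    exact ⟨H3, H4⟩
  rcases eq_or_lt_of_le hs1 with h1|h1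
  · have : tx = ty := by rw [htx, h1, one_smul, add_sub_cancel]
    rw [this] at H1 H2
    exact ⟨H1, H2⟩
  obtain ⟨ℓ0, c0, e0⟩ := h0
  obtain ⟨ℓx, cx, ex⟩ := hx
  obtain ⟨ℓy, cy, ey⟩ := hy
  have expand : ∀ ℓ : V →ₗ[ℝ] ℝ, ℓ tx = ℓ t0 + s * (ℓ ty - ℓ t0) := by
    intro ℓ
    rw [htx]
    simp [map_add, map_smul, map_sub, smul_eq_mul]
  simp only [e0, ex, ey] at H1 H2 H3 H4 ⊢
  rw [expand ℓ0, expand ℓx, expand ℓy] at *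
  have := realkey s (ℓ0 t0 + c0) (ℓx t0 + cx + s * (ℓx ty - ℓx t0)) (ℓy ty + cy)
    (ℓ0 ty - ℓ0 t0) (ℓx ty - ℓx t0) (ℓy ty - ℓy t0) h h1
    (by linarith) (by linarith) (by linarith) (by linarith)
  constructor <;> linarith [this.1, this.2]

/-- An affine score on a convex type space in a real topological vector space is
truthful iff it is weakly locally truthful. -/
theorem truthful_iff_weakly_locally_truthful {V : Type*} [AddCommGroup V] [Module ℝ V]
    [TopologicalSpace V] [IsTopologicalAddGroup V] [ContinuousSMul ℝ V]
    (T : Set V) (hT : T.Nonempty) (hTconv : Convex ℝ T)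
    (A : V → V → ℝ)
    (hA : ∀ t' ∈ T, ∃ (ℓ : V →ₗ[ℝ] ℝ) (c : ℝ), ∀ x, A t' x = ℓ x + c) :
    (∀ t ∈ T, ∀ t' ∈ T, A t' t ≤ A t t) ↔
    (∀ t ∈ T, ∃ U : Set V, IsOpen U ∧ t ∈ U ∧
      ∀ t' ∈ U ∩ T, A t' t ≤ A t t ∧ A t t' ≤ A t' t') := by
  constructor
  · intro h t ht
    exact ⟨Set.univ, isOpen_univ, trivial,
      fun t'' h'' => ⟨h t ht t'' h''.2, h t'' h''.2 t ht⟩⟩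
  · intro h t ht t' ht'
    set p : ℝ → V := fun l => t + l • (t' - t) with hpdef
    have hpmem : ∀ x ∈ Set.Icc (0:ℝ) 1, p x ∈ T := fun x hx =>
      hTconv.add_smul_sub_mem ht ht' hx
    set S : Set ℝ := {x ∈ Set.Icc (0:ℝ) 1 | A (p x) t ≤ A t t ∧ A t (p x) ≤ A (p x) (p x)}
      with hSdef
    have hp0 : p 0 = t := by simp [hpdef]
    have h0S : (0:ℝ) ∈ S := by
      refine ⟨⟨le_refl 0, zero_le_one⟩, ?_, ?_⟩ <;> rw [hp0]
    have hbdd : BddAbove S := ⟨1, fun x hx => hx.1.2⟩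
    have hSne : S.Nonempty := ⟨0, h0S⟩
    set m := sSup S with hmdef
    have hm0 : 0 ≤ m := le_csSup hbdd h0S
    have hm1 : m ≤ 1 := csSup_le hSne (fun x hx => hx.1.2)
    obtain ⟨U, hUopen, hUm, hU⟩ := h (p m) (hpmem m ⟨hm0, hm1⟩)
    have hcont : Continuous p := by
      exact continuous_const.add (continuous_id.smul continuous_const)
    obtain ⟨ε, hε, hball⟩ := Metric.isOpen_iff.mp (hUopen.preimage hcont) m hUm
    have hball' : ∀ μ : ℝ, |μ - m| < ε → p μ ∈ U := by
      intro μ hμ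
      exact hball (by rwa [Metric.mem_ball, Real.dist_eq])
    -- m ∈ S
    have hmS : m ∈ S := by
      rcases eq_or_lt_of_le hm0 with h0m|h0m
      · rwa [← h0m]
      obtain ⟨x, hxS, hx⟩ := exists_lt_of_lt_csSup hSne (show m - ε < m by linarith)
      have hxm : x ≤ m := le_csSup hbdd hxS
      have hpxU : p x ∈ U := hball' x (by rw [abs_sub_lt_iff]; constructor <;> linarith)
      have hpair := hU (p x) ⟨hpxU, hpmem x hxS.1⟩
      have hsub : p x = t + (x / m) • (p m - t) := by
        simp only [hpdef, add_sub_cancel_left, smul_smul]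
        rw [div_mul_cancel₀ _ (ne_of_gt h0m)]
      have hK := key A t (p x) (p m) (x / m) (div_nonneg hxS.1.1 hm0)
        ((div_le_one h0m).mpr hxm) hsub (hA t ht) (hA (p x) (hpmem x hxS.1))
        (hA (p m) (hpmem m ⟨hm0, hm1⟩)) hxS.2.1 hxS.2.2 hpair.2 hpair.1
      exact ⟨⟨hm0, hm1⟩, hK⟩
    have hm_eq : m = 1 := by
      by_contra hne
      have hmlt : m < 1 := lt_of_le_of_ne hm1 hne
      set μ := min (m + ε / 2) 1 with hμdef
      have hμm : m < μ := lt_min (by linarith) hmlt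
      have hμ1 : μ ≤ 1 := min_le_right _ _
      have hμm' : μ ≤ m + ε / 2 := min_le_left _ _
      have hμU : p μ ∈ U := hball' μ (by rw [abs_sub_lt_iff]; constructor <;> linarith)
      have hμT : p μ ∈ T := hpmem μ ⟨by linarith, hμ1⟩
      have hpair := hU (p μ) ⟨hμU, hμT⟩
      have hμpos : 0 < μ := lt_of_le_of_lt hm0 hμm
      have hsub : p m = t + (m / μ) • (p μ - t) := by
        simp only [hpdef, add_sub_cancel_left, smul_smul]
        rw [div_mul_cancel₀ _ (ne_of_gt hμpos)]
      have hK := key A t (p m) (p μ) (m / μ) (div_nonneg hm0 hμpos.le)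
        ((div_le_one hμpos).mpr hμm.le) hsub (hA t ht) (hA (p m) (hpmem m ⟨hm0, hm1⟩))
        (hA (p μ) hμT) hmS.2.1 hmS.2.2 hpair.1 hpair.2
      have hμS : μ ∈ S := ⟨⟨by linarith, hμ1⟩, hK⟩
      exact absurd (le_csSup hbdd hμS) (not_le.mpr hμm)
    have hp1 : p 1 = t' := by simp [hpdef]
    rw [hm_eq] at hmS
    have hfin := hmS.2.1
    rwa [hp1] at hfin
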